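/- Let A be a real symmetric invertible 2m×2m matrix such that 𝕁_m A is hyperbolic. Then A has signature (m, m): counted with multiplicity, A has exactly m positive eigenvalues and exactly m negative eigenvalues. -/

import Mathlib

open Matrix

/-- The standard complex structure `𝕁_m` on `ℝ^{2m} = ℝ^m × ℝ^m`, as a block matrix
`[[0, I], [−I, 0]]`. -/
noncomputable def Jmat (m : ℕ) : Matrix (Fin m ⊕ Fin m) (Fin m ⊕ Fin m) ℝ :=
  Matrix.fromBlocks 0 1 (-1) 0

/-- A real square matrix is *hyperbolic* if every complex eigenvalue of its
complexification has nonzero real part. -/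
def Matrix.Hyperbolic {I : Type*} [Fintype I] (B : Matrix I I ℝ) : Prop :=
  ∀ (μ : ℂ) (w : I → ℂ), w ≠ 0 →
    (B.map (fun x => (x : ℂ))).mulVec w = μ • w → μ.re ≠ 0

namespace Stmt8

open Module

section Pairing
variable {K V : Type*} [Field K] [AddCommGroup V] [Module K V]

theorem pairing_zero (ω : V →ₗ[K] V →ₗ[K] K) (f : End K V)
    (hskew : ∀ x y, ω (f x) y = - ω x (f y)) {μ ν : K} (hμν : μ + ν ≠ 0) :
    ∀ (n k l : ℕ), k + l = n → ∀ (x y : V),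
      ((f - μ • 1) ^ k) x = 0 → ((f - ν • 1) ^ l) y = 0 → ω x y = 0 := by
  intro n
  induction n using Nat.strong_induction_on with
  | _ n ih =>
  intro k l hn x y hx hy
  rcases Nat.eq_zero_or_pos k with hk | hk
  · subst hk; simp only [pow_zero, Module.End.one_apply] at hx; simp [hx]
  rcases Nat.eq_zero_or_pos l with hl | hl
  · subst hl; simp only [pow_zero, Module.End.one_apply] at hy; simp [hy]
  have h1 : ω ((f - μ • 1) x) y = ω (f x) y - μ • ω x y := by
    simp [LinearMap.sub_apply, LinearMap.smul_apply, map_sub, _root_.map_smul]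
  have h2 : ω x ((f - ν • 1) y) = ω x (f y) - ν • ω x y := by
    simp [LinearMap.sub_apply, LinearMap.smul_apply, map_sub, _root_.map_smul]
  have e1 : ω ((f - μ • 1) x) y = 0 := by
    refine ih ((k-1) + l) (by omega) (k-1) l rfl _ _ ?_ hy
    rw [← Module.End.mul_apply, ← pow_succ]
    rwa [Nat.sub_add_cancel hk]
  have e2 : ω x ((f - ν • 1) y) = 0 := by
    refine ih (k + (l-1)) (by omega) k (l-1) rfl _ _ hx ?_
    rw [← Module.End.mul_apply, ← pow_succ]
    rwa [Nat.sub_add_cancel hl]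
  rw [e1] at h1
  rw [e2] at h2
  rw [hskew] at h1
  have : (μ + ν) • ω x y = 0 := by
    simp only [smul_eq_mul] at h1 h2 ⊢
    linear_combination h1 + h2
  have := smul_eq_zero.mp this
  tauto

theorem esub_iso (ω : V →ₗ[K] V →ₗ[K] K) (f : End K V)
    (hskew : ∀ x y, ω (f x) y = - ω x (f y)) (s : Set K)
    (hs : ∀ μ ∈ s, ∀ ν ∈ s, μ + ν ≠ 0) :
    ∀ x ∈ ⨆ μ ∈ s, f.maxGenEigenspace μ, ∀ y ∈ ⨆ μ ∈ s, f.maxGenEigenspace μ,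
      ω x y = 0 := by
  have h1 : ∀ μ ∈ s, ∀ x ∈ f.maxGenEigenspace μ,
      (⨆ ν ∈ s, f.maxGenEigenspace ν) ≤ LinearMap.ker (ω x) := by
    intro μ hμ x hx
    refine iSup₂_le fun ν hν => fun y hy => ?_
    rw [LinearMap.mem_ker]
    obtain ⟨k, hk⟩ := (f.mem_maxGenEigenspace μ x).mp hx
    obtain ⟨l, hl⟩ := (f.mem_maxGenEigenspace ν y).mp hy
    exact pairing_zero ω f hskew (hs μ hμ ν hν) (k + l) k l rfl x y hk hl
  intro x hx y hy
  have h2 : (⨆ μ ∈ s, f.maxGenEigenspace μ) ≤ LinearMap.ker ((ω.flip) y) := by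
    refine iSup₂_le fun μ hμ => fun x' hx' => ?_
    rw [LinearMap.mem_ker, LinearMap.flip_apply]
    exact h1 μ hμ x' hx' hy
  simpa using h2 hx

/-- helper: sums pull out of dot products. -/
theorem sum_dotProduct' {ι I : Type*} [Fintype I] (s : Finset ι) (f : ι → I → ℂ) (b : I → ℂ) :
    (∑ i ∈ s, f i) ⬝ᵥ b = ∑ i ∈ s, (f i) ⬝ᵥ b := by
  simp only [dotProduct, Finset.sum_apply, Finset.sum_mul]
  rw [Finset.sum_comm]

theorem dotProduct_sum' {ι I : Type*} [Fintype I] (s : Finset ι) (b : I → ℂ) (f : ι → I → ℂ) :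
    b ⬝ᵥ (∑ i ∈ s, f i) = ∑ i ∈ s, b ⬝ᵥ (f i) := by
  simp only [dotProduct, Finset.sum_apply, Finset.mul_sum]
  rw [Finset.sum_comm]

end Pairing

variable (m : ℕ) (A : Matrix (Fin m ⊕ Fin m) (Fin m ⊕ Fin m) ℝ)

noncomputable def Ac : Matrix (Fin m ⊕ Fin m) (Fin m ⊕ Fin m) ℂ :=
  A.map (fun x => (x : ℂ))

noncomputable def Bc : Matrix (Fin m ⊕ Fin m) (Fin m ⊕ Fin m) ℂ :=
  (Jmat m * A).map (fun x => (x : ℂ))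

lemma Jmat_transpose : (Jmat m)ᵀ = -(Jmat m) := by
  rw [Jmat, fromBlocks_transpose]
  ext i j
  rcases i with i | i <;> rcases j with j | j <;> simp [fromBlocks]

lemma key_matrix (hA : A.IsHermitian) : (Bc m A)ᵀ * Ac m A = -(Ac m A * Bc m A) := by
  have hAt : Aᵀ = A := hA
  have hreal : (Jmat m * A)ᵀ * A = -(A * (Jmat m * A)) := by
    rw [transpose_mul, hAt, Jmat_transpose]
    noncomm_ring
  have h : Complex.ofRealHom.mapMatrix ((Jmat m * A)ᵀ * A)
      = Complex.ofRealHom.mapMatrix (-(A * (Jmat m * A))) := by rw [hreal]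
  simp only [_root_.map_mul, _root_.map_neg, RingHom.mapMatrix_apply, Matrix.map_mul] at h
  have hB : Bc m A = (Jmat m * A).map Complex.ofRealHom := rfl
  have hA' : Ac m A = A.map Complex.ofRealHom := rfl
  rw [hB, hA', ← transpose_map, Matrix.map_mul]
  exact h

noncomputable def fE : End ℂ ((Fin m ⊕ Fin m) → ℂ) := (Bc m A).mulVecLin

noncomputable def om : ((Fin m ⊕ Fin m) → ℂ) →ₗ[ℂ] ((Fin m ⊕ Fin m) → ℂ) →ₗ[ℂ] ℂ :=
  LinearMap.mk₂ ℂ (fun x y => x ⬝ᵥ (Ac m A *ᵥ y))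
    (fun x x' y => by simp [add_dotProduct])
    (fun c x y => by simp [smul_dotProduct])
    (fun x y y' => by simp [mulVec_add, dotProduct_add])
    (fun c x y => by simp [mulVec_smul, dotProduct_smul])

lemma om_apply (x y : (Fin m ⊕ Fin m) → ℂ) : om m A x y = x ⬝ᵥ (Ac m A *ᵥ y) := rfl

lemma om_skew (hA : A.IsHermitian) (x y : (Fin m ⊕ Fin m) → ℂ) :
    om m A (fE m A x) y = - om m A x (fE m A y) := by
  simp only [om_apply, fE, mulVecLin_apply]
  calc (Bc m A *ᵥ x) ⬝ᵥ (Ac m A *ᵥ y)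
      = (x ᵥ* (Bc m A)ᵀ) ⬝ᵥ (Ac m A *ᵥ y) := by rw [vecMul_transpose]
    _ = ((x ᵥ* (Bc m A)ᵀ) ᵥ* Ac m A) ⬝ᵥ y := by rw [dotProduct_mulVec]
    _ = (x ᵥ* ((Bc m A)ᵀ * Ac m A)) ⬝ᵥ y := by rw [vecMul_vecMul]
    _ = (x ᵥ* (-(Ac m A * Bc m A))) ⬝ᵥ y := by rw [key_matrix m A hA]
    _ = -((x ᵥ* (Ac m A * Bc m A)) ⬝ᵥ y) := by rw [vecMul_neg, neg_dotProduct]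
    _ = -(x ⬝ᵥ (Ac m A *ᵥ (Bc m A *ᵥ y))) := by rw [← dotProduct_mulVec, mulVec_mulVec]

lemma fE_star (x : (Fin m ⊕ Fin m) → ℂ) : fE m A (star x) = star (fE m A x) := by
  ext i
  simp only [fE, mulVecLin_apply, mulVec, dotProduct, Pi.star_apply]
  rw [star_sum]
  refine Finset.sum_congr rfl fun j _ => ?_
  rw [star_mul']
  congr 1
  simp [Bc, Matrix.map_apply, Complex.star_def, Complex.conj_ofReal]

lemma fE_pow_star (μ : ℂ) (k : ℕ) (x : (Fin m ⊕ Fin m) → ℂ) :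
    ((fE m A - (starRingEnd ℂ μ) • 1) ^ k) (star x) = star (((fE m A - μ • 1) ^ k) x) := by
  induction k generalizing x with
  | zero => simp
  | succ k ih =>
    have h : (fE m A - (starRingEnd ℂ μ) • 1) (star x) = star ((fE m A - μ • 1) x) := by
      simp only [LinearMap.sub_apply, LinearMap.smul_apply, Module.End.one_apply]
      rw [fE_star, star_sub, star_smul]
      rfl
    rw [pow_succ, pow_succ, Module.End.mul_apply, Module.End.mul_apply, h, ih]

lemma star_mem_maxGen (μ : ℂ) (x : (Fin m ⊕ Fin m) → ℂ)
    (hx : x ∈ (fE m A).maxGenEigenspace μ) :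
    star x ∈ (fE m A).maxGenEigenspace (starRingEnd ℂ μ) := by
  obtain ⟨k, hk⟩ := ((fE m A).mem_maxGenEigenspace μ x).mp hx
  refine ((fE m A).mem_maxGenEigenspace _ (star x)).mpr ⟨k, ?_⟩
  rw [fE_pow_star, hk]
  simp

end Stmt8

open Stmt8 Module

/-- If `A` is a real symmetric invertible `2m × 2m` matrix such that
`𝕁_m A` is hyperbolic, then `A` has signature `(m, m)`: counted with multiplicity, `A` has
exactly `m` positive and exactly `m` negative eigenvalues. -/
theorem stmt_8 (m : ℕ) (A : Matrix (Fin m ⊕ Fin m) (Fin m ⊕ Fin m) ℝ)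
    (hA : A.IsHermitian) (hAinv : IsUnit A)
    (hhyp : (Jmat m * A).Hyperbolic) :
    (Finset.univ.filter fun i => 0 < hA.eigenvalues i).card = m ∧
    (Finset.univ.filter fun i => hA.eigenvalues i < 0).card = m := by
  classical
  set e := hA.eigenvalues with he
  -- eigenvalues are nonzero
  have heig_ne : ∀ i, e i ≠ 0 := by
    intro i hi
    have hdet : A.det = ∏ j, (e j : ℝ) := hA.det_eq_prod_eigenvalues
    have : A.det ≠ 0 := by
      intro h0
      exact (hAinv.map (detMonoidHom : Matrix _ _ ℝ →* ℝ)).ne_zero (by simpa using h0)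
    rw [hdet] at this
    exact this (Finset.prod_eq_zero (Finset.mem_univ i) hi)
  -- eigenvalue count total
  have hcard_total : (Finset.univ.filter fun i => 0 < e i).card
      + (Finset.univ.filter fun i => e i < 0).card = m + m := by
    have hiff : ∀ i, (e i < 0) ↔ ¬ (0 < e i) := fun i =>
      ⟨fun h => not_lt.2 h.le, fun h => ((heig_ne i).lt_or_gt).resolve_right h⟩
    have : (Finset.univ.filter fun i => e i < 0)
        = (Finset.univ.filter fun i => ¬ 0 < e i) := by
      apply Finset.filter_congr
      intro i _
      simp [hiff i]
    rw [this, Finset.card_filter_add_card_filter_not, Finset.card_univ]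
    simp
  -- the complexified eigenvectors
  set u : (Fin m ⊕ Fin m) → (Fin m ⊕ Fin m) → ℂ :=
    fun i k => ((hA.eigenvectorBasis i : EuclideanSpace ℝ (Fin m ⊕ Fin m)) k : ℂ) with hu
  have hu_eig : ∀ i, Ac m A *ᵥ u i = (e i : ℂ) • u i := by
    intro i
    have h := hA.mulVec_eigenvectorBasis i
    ext k
    have hk := congrFun h k
    simp only [mulVec, dotProduct, Pi.smul_apply, smul_eq_mul] at hk
    simp only [Ac, mulVec, dotProduct, Matrix.map_apply, hu, Pi.smul_apply, smul_eq_mul]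
    exact_mod_cast hk
  have hu_orth : ∀ i j, star (u i) ⬝ᵥ u j = if i = j then 1 else 0 := by
    intro i j
    have h := hA.eigenvectorBasis.orthonormal
    rw [orthonormal_iff_ite] at h
    have h2 := h i j
    simp only [PiLp.inner_apply, RCLike.inner_apply, conj_trivial] at h2
    simp only [dotProduct, Pi.star_apply, hu, Complex.star_def, Complex.conj_ofReal]
    calc (∑ k, ((hA.eigenvectorBasis i k : ℂ)) * ((hA.eigenvectorBasis j k : ℂ)))
        = ((∑ k, hA.eigenvectorBasis i k * hA.eigenvectorBasis j k : ℝ) : ℂ) := by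
          push_cast; rfl
      _ = if i = j then 1 else 0 := by
          rw [Finset.sum_congr rfl (fun k _ => mul_comm (hA.eigenvectorBasis i k) (hA.eigenvectorBasis j k)), h2]; split <;> simp
  have hu_indep : LinearIndependent ℂ u := by
    rw [Fintype.linearIndependent_iff]
    intro g hg j
    have h0 : star (u j) ⬝ᵥ (∑ i, g i • u i) = 0 := by rw [hg]; simp [dotProduct]
    rw [dotProduct_sum'] at h0
    simp only [dotProduct_smul, hu_orth, smul_eq_mul, mul_ite, mul_one, mul_zero] at h0
    simpa using h0
  -- quadratic-form positivity on spans of eigenvectors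
  have hspan_quad : ∀ (p : (Fin m ⊕ Fin m) → Prop) (ε : ℝ), (∀ i, p i → 0 < ε * e i) →
      ∀ x ∈ Submodule.span ℂ (Set.range fun i : {i // p i} => u i.1),
      star x ⬝ᵥ (Ac m A *ᵥ x) = 0 → x = 0 := by
    intro p ε hε x hx hq
    obtain ⟨c, hc⟩ := (Submodule.mem_span_range_iff_exists_fun ℂ).mp hx
    have hAx : Ac m A *ᵥ (∑ i, c i • u i.1) = ∑ i : {i // p i}, c i • ((e i.1 : ℂ) • u i.1) := by
      rw [show Ac m A *ᵥ (∑ i : {i // p i}, c i • u i.1)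
          = (Ac m A).mulVecLin (∑ i : {i // p i}, c i • u i.1) from rfl, map_sum]
      refine Finset.sum_congr rfl fun i _ => ?_
      rw [LinearMap.map_smul, mulVecLin_apply, hu_eig]
    have hsx : star (∑ i : {i // p i}, c i • u i.1)
        = ∑ i : {i // p i}, (starRingEnd ℂ (c i)) • star (u i.1) := by
      rw [star_sum]
      exact Finset.sum_congr rfl fun i _ => by rw [star_smul]; rfl
    rw [← hc, hAx, hsx, sum_dotProduct'] at hq
    have hterm : ∀ i : {i // p i},
        ((starRingEnd ℂ (c i)) • star (u i.1)) ⬝ᵥ (∑ j : {j // p j}, c j • ((e j.1 : ℂ) • u j.1))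
          = ((Complex.normSq (c i) * e i.1 : ℝ) : ℂ) := by
      intro i
      rw [smul_dotProduct, dotProduct_sum']
      simp only [dotProduct_smul, hu_orth, smul_eq_mul, Subtype.coe_inj, mul_ite, mul_one,
        mul_zero, Finset.sum_ite_eq, Finset.mem_univ, if_true]
      have : (starRingEnd ℂ) (c i) * (c i * (e i.1 : ℂ))
          = (c i * (starRingEnd ℂ) (c i)) * (e i.1 : ℂ) := by ring
      rw [this, Complex.mul_conj]
      push_cast
      ring
    rw [Finset.sum_congr rfl (fun i _ => hterm i)] at hq
    rw [← Complex.ofReal_sum, Complex.ofReal_eq_zero] at hq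
    have hzero : ∀ i : {i // p i}, Complex.normSq (c i) * (ε * e i.1) = 0 := by
      have hnn : ∀ i ∈ Finset.univ, (0:ℝ) ≤ Complex.normSq (c i) * (ε * e i.1) :=
        fun i _ => mul_nonneg (Complex.normSq_nonneg _) (hε i.1 i.2).le
      have hsz : ∑ i : {i // p i}, Complex.normSq (c i) * (ε * e i.1) = 0 := by
        have : ∑ i : {i // p i}, Complex.normSq (c i) * (ε * e i.1)
            = ε * ∑ i : {i // p i}, Complex.normSq (c i) * e i.1 := by
          rw [Finset.mul_sum]; exact Finset.sum_congr rfl fun i _ => by ring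
        rw [this, hq, mul_zero]
      intro i
      exact (Finset.sum_eq_zero_iff_of_nonneg hnn).mp hsz i (Finset.mem_univ i)
    have hc0 : ∀ i : {i // p i}, c i = 0 := by
      intro i
      have h1 := hzero i
      have h2 : ε * e i.1 ≠ 0 := (hε i.1 i.2).ne'
      have := mul_eq_zero.mp h1
      rcases this with h | h
      · exact Complex.normSq_eq_zero.mp h
      · exact absurd h h2
    rw [← hc]
    exact Finset.sum_eq_zero fun i _ => by rw [hc0 i, zero_smul]
  -- rank of spans
  have hspan_rank : ∀ (p : (Fin m ⊕ Fin m) → Prop) [DecidablePred p],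
      finrank ℂ (Submodule.span ℂ (Set.range fun i : {i // p i} => u i.1))
        = (Finset.univ.filter p).card := by
    intro p _
    have h1 := finrank_span_eq_card (hu_indep.comp (Subtype.val : {i // p i} → _)
      Subtype.val_injective)
    simp only [Function.comp_def] at h1
    rw [h1]
    exact Fintype.card_subtype p
  -- spectral subspaces of B
  set f := fE m A with hf
  set Eneg : Submodule ℂ ((Fin m ⊕ Fin m) → ℂ) :=
    ⨆ μ ∈ {z : ℂ | z.re < 0}, f.maxGenEigenspace μ with hEneg
  set Epos : Submodule ℂ ((Fin m ⊕ Fin m) → ℂ) :=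
    ⨆ μ ∈ {z : ℂ | 0 < z.re}, f.maxGenEigenspace μ with hEpos
  have hsup : Eneg ⊔ Epos = ⊤ := by
    have htop := Module.End.iSup_maxGenEigenspace_eq_top f
    rw [eq_top_iff, ← htop]
    refine iSup_le fun μ => ?_
    rcases lt_trichotomy μ.re 0 with hμ | hμ | hμ
    · exact le_sup_of_le_left (le_iSup₂ (f := fun μ _ => f.maxGenEigenspace μ) μ hμ)
    · have hb : f.maxGenEigenspace μ = ⊥ := by
        by_contra hne
        have h1 : f.HasEigenvalue μ := by
          have hunif : f.HasUnifEigenvalue μ ⊤ := hne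
          exact (Module.End.hasUnifEigenvalue_iff_hasUnifEigenvalue_one
            (by norm_num)).mp hunif
        obtain ⟨v, hv⟩ := h1.exists_hasEigenvector
        exact absurd hμ
          (hhyp μ v hv.2 (by simpa [hf, fE, Bc, mulVecLin_apply] using hv.apply_eq_smul))
      rw [hb]; exact bot_le
    · exact le_sup_of_le_right (le_iSup₂ (f := fun μ _ => f.maxGenEigenspace μ) μ hμ)
  -- om vanishes on Eneg and on Epos
  have hiso_neg : ∀ x ∈ Eneg, ∀ y ∈ Eneg, om m A x y = 0 := by
    refine esub_iso (om m A) f (om_skew m A hA) _ fun μ hμ ν hν h0 => ?_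
    have : (μ + ν).re < 0 := by
      simpa [Complex.add_re] using add_neg hμ hν
    rw [h0] at this; simp at this
  have hiso_pos : ∀ x ∈ Epos, ∀ y ∈ Epos, om m A x y = 0 := by
    refine esub_iso (om m A) f (om_skew m A hA) _ fun μ hμ ν hν h0 => ?_
    have : 0 < (μ + ν).re := by
      simpa [Complex.add_re] using add_pos hμ hν
    rw [h0] at this; simp at this
  -- Eneg is star-stable
  have hstar_neg : ∀ x ∈ Eneg, star x ∈ Eneg := by
    have hle : Eneg ≤ Submodule.comap
        (starLinearEquiv ℂ (A := (Fin m ⊕ Fin m) → ℂ)).toLinearMap Eneg := by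
      refine iSup₂_le fun μ hμ => fun x hx => ?_
      have h1 := star_mem_maxGen m A μ x hx
      have h2 : ((starRingEnd ℂ) μ).re < 0 := by simpa using hμ
      have h3 : f.maxGenEigenspace ((starRingEnd ℂ) μ) ≤ Eneg :=
        le_iSup₂ (f := fun μ _ => f.maxGenEigenspace μ) _ h2
      rw [Submodule.mem_comap]
      exact h3 h1
    intro x hx
    simpa using hle hx
  -- hermitian quadratic form vanishes on Eneg
  have hquad_neg : ∀ x ∈ Eneg, star x ⬝ᵥ (Ac m A *ᵥ x) = 0 := by
    intro x hx
    exact hiso_neg (star x) (hstar_neg x hx) x hx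
  -- dim Eneg ≥ m
  have hVrank : finrank ℂ ((Fin m ⊕ Fin m) → ℂ) = m + m := by
    rw [Module.finrank_fintype_fun_eq_card]
    simp
  have hAcu : IsUnit (Ac m A) := hAinv.map Complex.ofRealHom.mapMatrix
  have hmulvec_inj : ∀ x : (Fin m ⊕ Fin m) → ℂ, Ac m A *ᵥ x = 0 → x = 0 := by
    intro x hx
    have hdet : IsUnit (Ac m A).det := (isUnit_iff_isUnit_det _).mp hAcu
    calc x = 1 *ᵥ x := (one_mulVec x).symm
      _ = ((Ac m A)⁻¹ * Ac m A) *ᵥ x := by rw [Matrix.nonsing_inv_mul _ hdet]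
      _ = (Ac m A)⁻¹ *ᵥ (Ac m A *ᵥ x) := by rw [← mulVec_mulVec]
      _ = 0 := by rw [hx, mulVec_zero]
  have hrank_neg : m ≤ finrank ℂ Eneg := by
    set Φ : Epos →ₗ[ℂ] Module.Dual ℂ Eneg :=
      (((LinearMap.lcomp ℂ ℂ (Eneg.subtype)).comp (om m A).flip).domRestrict Epos) with hΦ
    have hinj : Function.Injective Φ := by
      rw [injective_iff_map_eq_zero]
      intro x hx0
      have hker : ∀ y, om m A y x.1 = 0 := by
        have h1 : Eneg ≤ LinearMap.ker ((om m A).flip x.1) := by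
          intro y hy
          rw [LinearMap.mem_ker, LinearMap.flip_apply]
          exact congrArg (fun (φ : Module.Dual ℂ Eneg) => φ ⟨y, hy⟩) hx0
        have h2 : Epos ≤ LinearMap.ker ((om m A).flip x.1) := by
          intro y hy
          rw [LinearMap.mem_ker, LinearMap.flip_apply]
          exact hiso_pos y hy x.1 x.2
        have h3 : (⊤ : Submodule ℂ ((Fin m ⊕ Fin m) → ℂ))
            ≤ LinearMap.ker ((om m A).flip x.1) := by
          rw [← hsup]; exact sup_le h1 h2
        intro y
        have := h3 (Submodule.mem_top (x := y))
        rwa [LinearMap.mem_ker, LinearMap.flip_apply] at this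
      have hAx : Ac m A *ᵥ x.1 = 0 := by
        ext k
        have := hker (Pi.single k 1)
        rw [om_apply] at this
        simpa [dotProduct, Pi.single_apply] using this
      exact Subtype.ext (hmulvec_inj x.1 hAx)
    have hd1 : finrank ℂ Epos ≤ finrank ℂ (Module.Dual ℂ Eneg) :=
      LinearMap.finrank_le_finrank_of_injective hinj
    rw [Subspace.dual_finrank_eq] at hd1
    have hd2 := Submodule.finrank_sup_add_finrank_inf_eq Eneg Epos
    rw [hsup, finrank_top, hVrank] at hd2
    omega
  -- conclusion
  have hle_pos : (Finset.univ.filter fun i => 0 < e i).card ≤ m := by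
    have hdisj : Disjoint (Submodule.span ℂ (Set.range fun i : {i // 0 < e i} => u i.1)) Eneg := by
      rw [Submodule.disjoint_def]
      intro x hxP hxE
      exact hspan_quad (fun i => 0 < e i) 1 (by simp) x hxP (hquad_neg x hxE)
    have h2 := Submodule.finrank_add_finrank_le_of_disjoint hdisj
    rw [hspan_rank (fun i => 0 < e i), hVrank] at h2
    omega
  have hle_neg : (Finset.univ.filter fun i => e i < 0).card ≤ m := by
    have hdisj : Disjoint (Submodule.span ℂ (Set.range fun i : {i // e i < 0} => u i.1)) Eneg := by
      rw [Submodule.disjoint_def]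
      intro x hxP hxE
      refine hspan_quad (fun i => e i < 0) (-1) ?_ x hxP (hquad_neg x hxE)
      intro i hi
      simpa using hi
    have h2 := Submodule.finrank_add_finrank_le_of_disjoint hdisj
    rw [hspan_rank (fun i => e i < 0), hVrank] at h2
    omega
  omega
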